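/- arXiv:1504.08015 — 3 statements merged into one kernel-verified Lean document; each statement's English description precedes it below -/
import Mathlib

section
/- Discrete Sobolev inequality for step functions (Lemma 3.3). Let L > 0, ε = L/N for some N ∈ ℕ, and let f : ℝ → ℝ be an L-periodic step function constant on each interval [iε, (i+1)ε). Then sup_x |f(x)|² ≤ (1/L + 1) ∫₀ᴸ |f(x)|² dx + (1/2) ∫₀ᴸ |D⁺_ε f(x)|² dx; in particular ‖f‖_∞² ≤ (1/L + 1) ‖f‖²_{H¹_ε}, where ‖f‖²_{H¹_ε} = ∫₀ᴸ (|f|² + |D⁺_ε f|²) dx. -/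
open MeasureTheory Set

noncomputable section

/-- Forward discrete derivative `(D⁺_ε f)(x) = (f(x+ε) - f(x))/ε`. -/
def Dplus (ε : ℝ) (f : ℝ → ℝ) : ℝ → ℝ := fun x => (f (x + ε) - f x) / ε

/-- Integral of a function constant on `[s,t)`. -/
lemma step_piece (g : ℝ → ℝ) (s t c : ℝ) (hst : s ≤ t) (h : ∀ x ∈ Ico s t, g x = c) :
    IntervalIntegrable g volume s t ∧ (∫ y in s..t, g y) = (t - s) * c := by
  have hres : (volume : Measure ℝ).restrict (Ioc s t) = volume.restrict (Ico s t) :=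
    (Measure.restrict_congr_set Ico_ae_eq_Ioc).symm
  have hae : g =ᵐ[(volume : Measure ℝ).restrict (Ioc s t)] fun _ => c := by
    rw [hres]
    filter_upwards [ae_restrict_mem measurableSet_Ico] with x hx
    exact h x hx
  have hint : IntegrableOn g (Ioc s t) := by
    refine ((integrableOn_const_iff (C := c)).mpr (Or.inr ?_)).congr hae.symm
    exact measure_Ioc_lt_top
  refine ⟨(intervalIntegrable_iff_integrableOn_Ioc_of_le hst).mpr hint, ?_⟩
  rw [intervalIntegral.integral_of_le hst, integral_congr_ae hae, setIntegral_const,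
    Real.volume_real_Ioc_of_le hst, smul_eq_mul]

/-- Discrete bound: a periodic sequence is bounded by its mean plus half the total variation
of its squares... here stated for `g i = a i ^ 2` abstractly. -/
lemma discrete_bound (N : ℕ) (hN : N ≠ 0) (g : ℕ → ℝ) (hper : g N = g 0)
    (j : ℕ) (hj : j < N) :
    g j ≤ (∑ i ∈ Finset.range N, g i) / N + (∑ i ∈ Finset.range N, |g (i + 1) - g i|) / 2 := by
  set S := ∑ i ∈ Finset.range N, g i with hS
  set T := ∑ i ∈ Finset.range N, |g (i + 1) - g i| with hT
  have hN' : (0 : ℝ) < N := by exact_mod_cast Nat.pos_of_ne_zero hN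
  obtain ⟨k, hk, hkmin⟩ := Finset.exists_min_image (Finset.range N) g
    ⟨0, Finset.mem_range.mpr (Nat.pos_of_ne_zero hN)⟩
  have hkS : g k ≤ S / N := by
    rw [le_div_iff₀ hN']
    calc g k * N = ∑ _i ∈ Finset.range N, g k := by
          rw [Finset.sum_const, Finset.card_range, nsmul_eq_mul, mul_comm]
      _ ≤ S := Finset.sum_le_sum fun i hi => hkmin i hi
  have tele : ∀ p q : ℕ, p ≤ q →
      (∑ i ∈ Finset.Ico p q, (g (i + 1) - g i)) = g q - g p := by
    intro p q hpq
    rw [Finset.sum_Ico_eq_sub _ hpq, Finset.sum_range_sub, Finset.sum_range_sub]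
    ring
  have habs : ∀ p q : ℕ, p ≤ q →
      |g q - g p| ≤ ∑ i ∈ Finset.Ico p q, |g (i + 1) - g i| := by
    intro p q hpq
    rw [← tele p q hpq]
    exact Finset.abs_sum_le_sum_abs _ _
  have half : ∀ p q : ℕ, p ≤ q → q ≤ N → |g q - g p| ≤ T / 2 := by
    intro p q hpq hqN
    have h1 := habs p q hpq
    have h2 : |g q - g p| ≤ (∑ i ∈ Finset.Ico 0 p, |g (i + 1) - g i|)
        + ∑ i ∈ Finset.Ico q N, |g (i + 1) - g i| := by
      have e : g q - g p = -((g p - g 0) + (g N - g q)) := by rw [hper]; ring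
      rw [e, abs_neg]
      calc |(g p - g 0) + (g N - g q)| ≤ |g p - g 0| + |g N - g q| := abs_add_le _ _
        _ ≤ _ := add_le_add (habs 0 p (Nat.zero_le _)) (habs q N hqN)
    have hsplit : (∑ i ∈ Finset.Ico 0 p, |g (i + 1) - g i|)
        + (∑ i ∈ Finset.Ico p q, |g (i + 1) - g i|)
        + (∑ i ∈ Finset.Ico q N, |g (i + 1) - g i|) = T := by
      rw [Finset.sum_Ico_consecutive _ (Nat.zero_le p) hpq,
        Finset.sum_Ico_consecutive _ (Nat.zero_le q) hqN, hT, Finset.range_eq_Ico]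
    linarith
  have habs2 : |g j - g k| ≤ T / 2 := by
    rcases le_total j k with h | h
    · rw [abs_sub_comm]
      exact half j k h (Finset.mem_range.mp hk).le
    · exact half k j h hj.le
  have := le_abs_self (g j - g k)
  linarith

lemma arith1 (L ε S D : ℝ) (hL : L ≠ 0) (hε : ε ≠ 0) :
    (1 / L + 1) * (ε * S) + (1 / 2) * (D / ε) = ε * S / L + ε * S + D / (2 * ε) := by
  field_simp

lemma arith2 (L ε S D : ℝ) (hL : 0 < L) (hε : 0 < ε) (hS : 0 ≤ S) (hD : 0 ≤ D) :
    ε * S / L + ε * S + D / (2 * ε) ≤ (1 / L + 1) * (ε * S + D / ε) := by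
  have hu : 0 ≤ D / ε := div_nonneg hD hε.le
  have hw : 0 < 1 / L := by positivity
  have h : D / (2 * ε) = (1 / 2) * (D / ε) := by field_simp
  have hv : ε * S / L = (1 / L) * (ε * S) := by ring
  rw [h, hv]
  nlinarith [mul_nonneg hw.le hu]

/-- **Discrete Sobolev inequality for step functions (Lemma 3.3).**
Let `ε = L/N` and let `f` be an `L`-periodic step function, constant on each interval
`[iε, (i+1)ε)`.  Then `sup_x |f(x)|² ≤ (1/L + 1) ∫₀ᴸ |f|² + (1/2) ∫₀ᴸ |D⁺_ε f|²`; in particular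
`‖f‖_∞² ≤ (1/L + 1) ‖f‖²_{H¹_ε}` where `‖f‖²_{H¹_ε} = ∫₀ᴸ (|f|² + |D⁺_ε f|²)`. -/
theorem discrete_sobolev
    (L : ℝ) (hL : 0 < L) (N : ℕ) (hN : N ≠ 0) (ε : ℝ) (hε : ε = L / N)
    (f : ℝ → ℝ)
    -- `f` is `L`-periodic
    (hper : ∀ x : ℝ, f (x + L) = f x)
    -- `f` is a step function, constant on each interval `[iε, (i+1)ε)`
    (hstep : ∀ i : ℤ, ∀ x ∈ Ico ((i : ℝ) * ε) (((i : ℝ) + 1) * ε), f x = f ((i : ℝ) * ε)) :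
    (∀ x : ℝ, f x ^ 2 ≤ (1 / L + 1) * (∫ y in (0 : ℝ)..L, f y ^ 2)
        + (1 / 2) * ∫ y in (0 : ℝ)..L, (Dplus ε f y) ^ 2) ∧
    (∀ x : ℝ, f x ^ 2 ≤ (1 / L + 1) * ∫ y in (0 : ℝ)..L, (f y ^ 2 + (Dplus ε f y) ^ 2)) := by
  have hN' : (0 : ℝ) < N := by exact_mod_cast Nat.pos_of_ne_zero hN
  have hε' : 0 < ε := by rw [hε]; positivity
  have hNε : (N : ℝ) * ε = L := by rw [hε]; field_simp
  set a : ℕ → ℝ := fun i => f (i * ε) with ha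
  -- step property with natural indices
  have hstep' : ∀ i : ℕ, ∀ x ∈ Ico ((i : ℝ) * ε) (((i : ℝ) + 1) * ε), f x = a i := by
    intro i x hx
    have hc : ((i : ℤ) : ℝ) = (i : ℝ) := by push_cast; ring
    have := hstep (i : ℤ) x (by rw [hc]; exact hx)
    rw [hc] at this
    exact this
  -- the discrete derivative on each piece
  have hDi : ∀ i : ℕ, ∀ x ∈ Ico ((i : ℝ) * ε) (((i : ℝ) + 1) * ε),
      Dplus ε f x = (a (i + 1) - a i) / ε := by
    intro i x hx
    obtain ⟨hx1, hx2⟩ := hx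
    have h1 : f x = a i := hstep' i x ⟨hx1, hx2⟩
    have h2 : f (x + ε) = a (i + 1) := by
      apply hstep' (i + 1)
      constructor
      · push_cast
        nlinarith
      · push_cast
        nlinarith
    simp only [Dplus, h1, h2]
  -- integral of a piecewise constant function
  have key : ∀ (g : ℝ → ℝ) (c : ℕ → ℝ),
      (∀ i : ℕ, ∀ x ∈ Ico ((i : ℝ) * ε) (((i : ℝ) + 1) * ε), g x = c i) →
      (∫ y in (0 : ℝ)..L, g y) = ε * ∑ i ∈ Finset.range N, c i := by
    intro g c hgc
    have hp : ∀ i : ℕ, IntervalIntegrable g volume ((i : ℝ) * ε) (((i : ℝ) + 1) * ε) ∧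
        (∫ y in ((i : ℝ) * ε)..(((i : ℝ) + 1) * ε), g y) = ε * c i := by
      intro i
      have hst : (i : ℝ) * ε ≤ ((i : ℝ) + 1) * ε := by nlinarith
      have h := step_piece g _ _ (c i) hst (hgc i)
      refine ⟨h.1, ?_⟩
      rw [h.2]; ring
    have hint : ∀ k, k < N →
        IntervalIntegrable g volume ((k : ℝ) * ε) (((k + 1 : ℕ) : ℝ) * ε) := by
      intro k _
      have := (hp k).1
      convert this using 2
      push_cast; ring
    have hsum := intervalIntegral.sum_integral_adjacent_intervals
      (a := fun k : ℕ => (k : ℝ) * ε) (μ := volume) (f := g) hint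
    have h0 : ((0 : ℕ) : ℝ) * ε = 0 := by norm_num
    have hNL : ((N : ℕ) : ℝ) * ε = L := hNε
    calc (∫ y in (0 : ℝ)..L, g y)
        = ∫ y in (((0 : ℕ) : ℝ) * ε)..(((N : ℕ) : ℝ) * ε), g y := by rw [h0, hNL]
      _ = ∑ k ∈ Finset.range N, ∫ y in ((k : ℝ) * ε)..(((k + 1 : ℕ) : ℝ) * ε), g y :=
          hsum.symm
      _ = ∑ k ∈ Finset.range N, ε * c k := by
          refine Finset.sum_congr rfl fun k _ => ?_
          have := (hp k).2
          convert this using 2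
          push_cast; ring
      _ = ε * ∑ i ∈ Finset.range N, c i := (Finset.mul_sum _ _ _).symm
  set S := ∑ i ∈ Finset.range N, a i ^ 2 with hS
  set Dsum := ∑ i ∈ Finset.range N, (a (i + 1) - a i) ^ 2 with hDsum
  have hS0 : 0 ≤ S := Finset.sum_nonneg fun i _ => sq_nonneg _
  have hD0 : 0 ≤ Dsum := Finset.sum_nonneg fun i _ => sq_nonneg _
  -- the three integral computations
  have hI1 : (∫ y in (0 : ℝ)..L, f y ^ 2) = ε * S := by
    apply key
    intro i x hx
    rw [hstep' i x hx]
  have hI2 : (∫ y in (0 : ℝ)..L, (Dplus ε f y) ^ 2) = Dsum / ε := by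
    have := key (fun y => (Dplus ε f y) ^ 2) (fun i => ((a (i + 1) - a i) / ε) ^ 2)
      (fun i x hx => by show Dplus ε f x ^ 2 = _; rw [hDi i x hx])
    rw [this]
    rw [Finset.mul_sum]
    rw [hDsum, Finset.sum_div]
    refine Finset.sum_congr rfl fun i _ => ?_
    field_simp
  have hI3 : (∫ y in (0 : ℝ)..L, (f y ^ 2 + (Dplus ε f y) ^ 2)) = ε * S + Dsum / ε := by
    have := key (fun y => f y ^ 2 + (Dplus ε f y) ^ 2)
      (fun i => a i ^ 2 + ((a (i + 1) - a i) / ε) ^ 2)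
      (fun i x hx => by show f x ^ 2 + Dplus ε f x ^ 2 = _; rw [hstep' i x hx, hDi i x hx])
    rw [this, Finset.sum_add_distrib, mul_add, ← hS]
    congr 1
    rw [Finset.mul_sum, hDsum, Finset.sum_div]
    refine Finset.sum_congr rfl fun i _ => ?_
    field_simp
  clear_value S Dsum
  -- every value of f is one of the a j, j < N
  have hval : ∀ x : ℝ, ∃ j : ℕ, j < N ∧ f x = a j := by
    intro x
    have hp : Function.Periodic f L := hper
    set x' := x - ⌊x / L⌋ * L with hx'
    have hfx : f x' = f x := hp.sub_int_mul_eq ⌊x / L⌋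
    have h0 : 0 ≤ x' := Int.sub_floor_div_mul_nonneg x hL
    have h1 : x' < L := Int.sub_floor_div_mul_lt x hL
    set j' : ℤ := ⌊x' / ε⌋ with hj'
    have hj0 : 0 ≤ j' := Int.floor_nonneg.mpr (by positivity)
    have hjN : j' < (N : ℤ) := by
      apply Int.floor_lt.mpr
      push_cast
      rw [div_lt_iff₀ hε']
      linarith [hNε]
    refine ⟨j'.toNat, by omega, ?_⟩
    have hcast : ((j'.toNat : ℕ) : ℝ) = ((j' : ℤ) : ℝ) := by
      exact_mod_cast congrArg (Int.cast : ℤ → ℝ) (Int.toNat_of_nonneg hj0)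
    have hmem : x' ∈ Ico (((j' : ℤ) : ℝ) * ε) ((((j' : ℤ) : ℝ) + 1) * ε) := by
      constructor
      · have hle := Int.floor_le (x' / ε)
        have := mul_le_mul_of_nonneg_right hle hε'.le
        rwa [div_mul_cancel₀ _ hε'.ne'] at this
      · have hlt := Int.lt_floor_add_one (x' / ε)
        have : x' / ε < ((j' : ℤ) : ℝ) + 1 := by exact_mod_cast hlt
        calc x' = (x' / ε) * ε := by field_simp
          _ < (((j' : ℤ) : ℝ) + 1) * ε := by nlinarith
    have := hstep j' x' hmem
    rw [← hfx, this, ha]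
    simp only
    rw [hcast]
  -- periodicity of a
  have haN : a N = a 0 := by
    have : f ((N : ℝ) * ε) = f 0 := by
      rw [hNε]
      simpa using hper 0
    simpa [ha] using this
  have hS' : (∑ i ∈ Finset.range N, a (i + 1) ^ 2) = S := by
    have h1 : (∑ i ∈ Finset.range (N + 1), a i ^ 2)
        = (∑ i ∈ Finset.range N, a (i + 1) ^ 2) + a 0 ^ 2 := Finset.sum_range_succ' _ _
    have h2 : (∑ i ∈ Finset.range (N + 1), a i ^ 2) = S + a N ^ 2 := by
      rw [hS]; exact Finset.sum_range_succ _ _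
    rw [haN] at h2
    linarith
  -- bound on total variation of squares
  have hT : (∑ i ∈ Finset.range N, |a (i + 1) ^ 2 - a i ^ 2|)
      ≤ Dsum / (2 * ε) + 2 * ε * S := by
    have hterm : ∀ i : ℕ, |a (i + 1) ^ 2 - a i ^ 2|
        ≤ (a (i + 1) - a i) ^ 2 / (2 * ε) + ε * (a i ^ 2 + a (i + 1) ^ 2) := by
      intro i
      set u := a i
      set v := a (i + 1)
      have h2ε : (0 : ℝ) < 2 * ε := by linarith
      have e1 : (v - u) ^ 2 / (2 * ε) + ε * (u ^ 2 + v ^ 2)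
          = ((v - u) ^ 2 + 2 * ε ^ 2 * (u ^ 2 + v ^ 2)) / (2 * ε) := by
        field_simp
      rw [e1, le_div_iff₀ h2ε]
      have hA : (v ^ 2 - u ^ 2) * (2 * ε) ≤ (v - u) ^ 2 + 2 * ε ^ 2 * (u ^ 2 + v ^ 2) := by
        nlinarith [sq_nonneg (v - u - ε * (v + u)), sq_nonneg (ε * (v - u))]
      have hB : -(v ^ 2 - u ^ 2) * (2 * ε) ≤ (v - u) ^ 2 + 2 * ε ^ 2 * (u ^ 2 + v ^ 2) := by
        nlinarith [sq_nonneg (v - u + ε * (v + u)), sq_nonneg (ε * (v - u))]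
      rcases abs_cases (v ^ 2 - u ^ 2) with ⟨he, _⟩ | ⟨he, _⟩ <;> rw [he]
      · exact hA
      · exact hB
    calc (∑ i ∈ Finset.range N, |a (i + 1) ^ 2 - a i ^ 2|)
        ≤ ∑ i ∈ Finset.range N, ((a (i + 1) - a i) ^ 2 / (2 * ε)
            + ε * (a i ^ 2 + a (i + 1) ^ 2)) :=
          Finset.sum_le_sum fun i _ => hterm i
      _ = Dsum / (2 * ε) + 2 * ε * S := by
          rw [Finset.sum_add_distrib, ← Finset.sum_div, ← hDsum, ← Finset.mul_sum,
            Finset.sum_add_distrib, ← hS, hS']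
          ring
  -- common pointwise bound
  have hcommon : ∀ x : ℝ, f x ^ 2 ≤ ε * S / L + ε * S + Dsum / (2 * ε) := by
    intro x
    obtain ⟨j, hjN, hfj⟩ := hval x
    have hb := discrete_bound N hN (fun i => a i ^ 2) (by simpa using congrArg (· ^ 2) haN)
      j hjN
    rw [← hS] at hb
    have hSN : S / N = ε * S / L := by
      rw [← hNε]
      field_simp
    have h24 : Dsum / (2 * ε) = 2 * (Dsum / (4 * ε)) := by
      field_simp
      ring
    have hhalf : (∑ i ∈ Finset.range N, |a (i + 1) ^ 2 - a i ^ 2|) / 2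
        ≤ Dsum / (4 * ε) + ε * S := by linarith
    have hquarter : Dsum / (4 * ε) ≤ Dsum / (2 * ε) :=
      div_le_div_of_nonneg_left hD0 (by linarith) (by linarith)
    rw [hfj]
    calc a j ^ 2 ≤ S / N + (∑ i ∈ Finset.range N, |a (i + 1) ^ 2 - a i ^ 2|) / 2 := hb
      _ ≤ ε * S / L + ε * S + Dsum / (2 * ε) := by
          linarith [hSN, hhalf, hquarter]
  constructor
  · intro x
    rw [hI1, hI2]
    rw [arith1 L ε S Dsum hL.ne' hε'.ne']
    exact hcommon x
  · intro x
    rw [hI3]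
    linarith [hcommon x, arith2 L ε S Dsum hL hε' hS0 hD0]

end
end

section
/- Finite range of the interaction coefficients K^p. With the coefficients K^p_{i,j} on the periodic lattice ℤ/N defined by K¹_{i,j} = ε⁻² if j = i±1 (mod N), 0 otherwise, and the recursion K^ℓ_{i,j} = ε⁻² [ K^{ℓ−1}_{i,j−1} + K^{ℓ−1}_{i,j+1} − 2 K^{ℓ−1}_{i,j} − (δ_{i+1,j} + δ_{i−1,j}) Σ_{j'} K^{ℓ−1}_{i,j'} ]: for every p ≥ 1, K^p_{i,j} = 0 whenever the circular distance d(i,j) = min_{k ∈ ℤ} |i − j + kN| satisfies d(i,j) > p. -/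
open Finset

noncomputable section

/-- The interaction coefficients `K^p_{i,j}` on the periodic lattice `ℤ/N`:
`K¹_{i,j} = ε⁻²` if `j = i ± 1 (mod N)` and `0` otherwise, and for `ℓ > 1`
`K^ℓ_{i,j} = ε⁻² [K^{ℓ-1}_{i,j-1} + K^{ℓ-1}_{i,j+1} - 2K^{ℓ-1}_{i,j}
  - (δ_{i+1,j} + δ_{i-1,j}) Σ_{j'} K^{ℓ-1}_{i,j'}]`. -/
def Kcoef (ε : ℝ) (N : ℕ) [NeZero N] : ℕ → ZMod N → ZMod N → ℝ
  | 0 => fun _ _ => 0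
  | 1 => fun i j => if j = i + 1 ∨ j = i - 1 then 1 / ε ^ 2 else 0
  | (ℓ + 2) => fun i j =>
      (1 / ε ^ 2) *
        (Kcoef ε N (ℓ + 1) i (j - 1) + Kcoef ε N (ℓ + 1) i (j + 1)
          - 2 * Kcoef ε N (ℓ + 1) i j
          - ((if j = i + 1 then (1 : ℝ) else 0) + (if j = i - 1 then (1 : ℝ) else 0))
              * ∑ j' : ZMod N, Kcoef ε N (ℓ + 1) i j')

/-- The circular distance on the lattice `ℤ/N`: `d(i,j) = min_{k ∈ ℤ} |i - j + kN|`. -/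
def circDist (N : ℕ) (i j : ZMod N) : ℕ :=
  sInf {m : ℕ | ∃ k : ℤ, (m : ℤ) = |(ZMod.val i : ℤ) - (ZMod.val j : ℤ) + k * N|}

lemma mem_distSet_iff (N : ℕ) [NeZero N] (i j : ZMod N) (m : ℕ) :
    (∃ k : ℤ, (m : ℤ) = |(ZMod.val i : ℤ) - (ZMod.val j : ℤ) + k * N|) ↔
      ((m : ZMod N) = i - j ∨ (m : ZMod N) = j - i) := by
  constructor
  · rintro ⟨k, hk⟩
    rcases abs_cases ((ZMod.val i : ℤ) - (ZMod.val j : ℤ) + k * N) with ⟨h, _⟩ | ⟨h, _⟩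
    · left
      have := congrArg (fun z : ℤ => (z : ZMod N)) (hk.trans h)
      simpa [ZMod.natCast_val, ZMod.cast_id, ZMod.natCast_self] using this
    · right
      have := congrArg (fun z : ℤ => (z : ZMod N)) (hk.trans h)
      push_cast at this
      simp only [ZMod.natCast_val, ZMod.cast_id, ZMod.natCast_self, mul_zero, add_zero] at this
      linear_combination (norm := ring_nf) this
  · rintro (h | h)
    · have h2 : ((((m : ℤ) - ((ZMod.val i : ℤ) - (ZMod.val j : ℤ))) : ℤ) : ZMod N) = 0 := by
        push_cast
        simp only [ZMod.natCast_val, ZMod.cast_id]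
        linear_combination h
      rw [ZMod.intCast_zmod_eq_zero_iff_dvd] at h2
      obtain ⟨k, hk⟩ := h2
      refine ⟨k, ?_⟩
      have : (ZMod.val i : ℤ) - (ZMod.val j : ℤ) + k * N = m := by linarith
      rw [this, abs_of_nonneg (Int.natCast_nonneg m)]
    · have h2 : ((((m : ℤ) + ((ZMod.val i : ℤ) - (ZMod.val j : ℤ))) : ℤ) : ZMod N) = 0 := by
        push_cast
        simp only [ZMod.natCast_val, ZMod.cast_id]
        linear_combination h
      rw [ZMod.intCast_zmod_eq_zero_iff_dvd] at h2
      obtain ⟨k, hk⟩ := h2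
      refine ⟨-k, ?_⟩
      have : (ZMod.val i : ℤ) - (ZMod.val j : ℤ) + (-k) * N = -m := by linarith
      rw [this, abs_neg, abs_of_nonneg (Int.natCast_nonneg m)]

lemma circDist_le (N : ℕ) [NeZero N] (i j : ZMod N) (m : ℕ)
    (h : (m : ZMod N) = i - j ∨ (m : ZMod N) = j - i) : circDist N i j ≤ m :=
  Nat.sInf_le ((mem_distSet_iff N i j m).mpr h)

lemma circDist_spec (N : ℕ) [NeZero N] (i j : ZMod N) :
    ((circDist N i j : ZMod N) = i - j ∨ (circDist N i j : ZMod N) = j - i) := by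
  have hne : {m : ℕ | ∃ k : ℤ, (m : ℤ) = |(ZMod.val i : ℤ) - (ZMod.val j : ℤ) + k * N|}.Nonempty := by
    refine ⟨((ZMod.val i : ℤ) - (ZMod.val j : ℤ)).natAbs, 0, ?_⟩
    rw [zero_mul, add_zero, Int.abs_eq_natAbs]
  exact (mem_distSet_iff N i j _).mp (Nat.sInf_mem hne)

lemma circDist_triangle_add (N : ℕ) [NeZero N] (i j : ZMod N) :
    circDist N i j ≤ circDist N i (j + 1) + 1 := by
  rcases circDist_spec N i (j + 1) with h | h
  · have : ((circDist N i (j + 1) + 1 : ℕ) : ZMod N) = i - j := by push_cast; rw [h]; ring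
    exact circDist_le N i j _ (Or.inl this)
  · cases h0 : circDist N i (j + 1) with
    | zero =>
      rw [h0] at h
      have : ((1 : ℕ) : ZMod N) = i - j := by
        push_cast at h ⊢
        linear_combination -h
      have := circDist_le N i j 1 (Or.inl this)
      omega
    | succ m' =>
      rw [h0] at h
      have : ((m' : ℕ) : ZMod N) = j - i := by
        push_cast at h ⊢
        linear_combination h
      have := circDist_le N i j m' (Or.inr this)
      omega

lemma circDist_triangle_sub (N : ℕ) [NeZero N] (i j : ZMod N) :
    circDist N i j ≤ circDist N i (j - 1) + 1 := by
  rcases circDist_spec N i (j - 1) with h | h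
  · cases h0 : circDist N i (j - 1) with
    | zero =>
      rw [h0] at h
      have : ((1 : ℕ) : ZMod N) = j - i := by
        push_cast at h ⊢
        linear_combination -h
      have := circDist_le N i j 1 (Or.inr this)
      omega
    | succ m' =>
      rw [h0] at h
      have : ((m' : ℕ) : ZMod N) = i - j := by
        push_cast at h ⊢
        linear_combination h
      have := circDist_le N i j m' (Or.inl this)
      omega
  · have : ((circDist N i (j - 1) + 1 : ℕ) : ZMod N) = j - i := by push_cast; rw [h]; ring
    exact circDist_le N i j _ (Or.inr this)

lemma circDist_succ_le (N : ℕ) [NeZero N] (i : ZMod N) : circDist N i (i + 1) ≤ 1 :=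
  circDist_le N i (i + 1) 1 (Or.inr (by push_cast; ring))

lemma circDist_pred_le (N : ℕ) [NeZero N] (i : ZMod N) : circDist N i (i - 1) ≤ 1 :=
  circDist_le N i (i - 1) 1 (Or.inl (by push_cast; ring))

lemma Kcoef_zero_aux (ε : ℝ) (N : ℕ) [NeZero N] :
    ∀ ℓ : ℕ, ∀ i j : ZMod N, ℓ + 1 < circDist N i j → Kcoef ε N (ℓ + 1) i j = 0 := by
  intro ℓ
  induction ℓ with
  | zero =>
    intro i j hd
    show (if j = i + 1 ∨ j = i - 1 then 1 / ε ^ 2 else 0) = 0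
    rw [if_neg]
    rintro (rfl | rfl)
    · exact absurd (circDist_succ_le N i) (by omega)
    · exact absurd (circDist_pred_le N i) (by omega)
  | succ ℓ ih =>
    intro i j hd
    have h1 : Kcoef ε N (ℓ + 1) i (j - 1) = 0 := by
      refine ih i (j - 1) ?_
      have := circDist_triangle_sub N i j
      omega
    have h2 : Kcoef ε N (ℓ + 1) i (j + 1) = 0 := by
      refine ih i (j + 1) ?_
      have := circDist_triangle_add N i j
      omega
    have h3 : Kcoef ε N (ℓ + 1) i j = 0 := ih i j (by omega)
    have h4 : (if j = i + 1 then (1 : ℝ) else 0) = 0 := by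
      rw [if_neg]; rintro rfl
      exact absurd (circDist_succ_le N i) (by omega)
    have h5 : (if j = i - 1 then (1 : ℝ) else 0) = 0 := by
      rw [if_neg]; rintro rfl
      exact absurd (circDist_pred_le N i) (by omega)
    show (1 / ε ^ 2) *
        (Kcoef ε N (ℓ + 1) i (j - 1) + Kcoef ε N (ℓ + 1) i (j + 1)
          - 2 * Kcoef ε N (ℓ + 1) i j
          - ((if j = i + 1 then (1 : ℝ) else 0) + (if j = i - 1 then (1 : ℝ) else 0))
              * ∑ j' : ZMod N, Kcoef ε N (ℓ + 1) i j') = 0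
    rw [h1, h2, h3, h4, h5]
    ring

/-- **Finite range of the interaction coefficients `K^p`.**
For every `p ≥ 1`, `K^p_{i,j} = 0` whenever the circular distance `d(i,j)` exceeds `p`. -/
theorem Kcoef_finite_range
    (ε : ℝ) (hε : 0 < ε) (N : ℕ) [NeZero N]
    (p : ℕ) (hp : 1 ≤ p) (i j : ZMod N) (hd : p < circDist N i j) :
    Kcoef ε N p i j = 0 := by
  obtain ⟨ℓ, rfl⟩ := Nat.exists_eq_add_of_le hp
  rw [add_comm] at hd ⊢
  exact Kcoef_zero_aux ε N ℓ i j hd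

end
end

section
/- Translation invariance and symmetry of the interaction coefficients K^p. With the coefficients K^p_{i,j} on the periodic lattice ℤ/N defined by K¹_{i,j} = ε⁻² if j = i±1 (mod N), 0 otherwise, and the recursion K^ℓ_{i,j} = ε⁻² [ K^{ℓ−1}_{i,j−1} + K^{ℓ−1}_{i,j+1} − 2 K^{ℓ−1}_{i,j} − (δ_{i+1,j} + δ_{i−1,j}) Σ_{j'} K^{ℓ−1}_{i,j'} ]: for every p ≥ 1, K^p_{i,j} depends only on i − j mod N (i.e. K^p_{i+k,j+k} = K^p_{i,j} for all k), and K^p_{i,j} = K^p_{j,i} for all i, j (action–reaction symmetry). -/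
open Finset

noncomputable section

lemma Kcoef_trans (ε : ℝ) (N : ℕ) [NeZero N] :
    ∀ (p : ℕ) (i j k : ZMod N), Kcoef ε N p (i + k) (j + k) = Kcoef ε N p i j
  | 0, i, j, k => rfl
  | 1, i, j, k => by
      simp only [Kcoef]
      rw [show i + k + 1 = (i + 1) + k by ring, show i + k - 1 = (i - 1) + k by ring,
        ]
      simp only [add_left_inj]
  | (ℓ + 2), i, j, k => by
      have IH := Kcoef_trans ε N (ℓ + 1)
      have hsum : ∑ j' : ZMod N, Kcoef ε N (ℓ + 1) (i + k) j'
          = ∑ j' : ZMod N, Kcoef ε N (ℓ + 1) i j' := by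
        rw [← Equiv.sum_comp (Equiv.addRight k)
          (fun j' => Kcoef ε N (ℓ + 1) (i + k) j')]
        exact Finset.sum_congr rfl fun x _ => IH i x k
      simp only [Kcoef]
      rw [show j + k - 1 = (j - 1) + k by ring, show j + k + 1 = (j + 1) + k by ring,
        IH, IH, IH, hsum, show i + k + 1 = (i + 1) + k by ring,
        show i + k - 1 = (i - 1) + k by ring]
      simp only [add_left_inj]

lemma Kcoef_refl (ε : ℝ) (N : ℕ) [NeZero N] :
    ∀ (p : ℕ) (i j : ZMod N), Kcoef ε N p (-i) (-j) = Kcoef ε N p i j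
  | 0, i, j => rfl
  | 1, i, j => by
      simp only [Kcoef]
      rw [show -i + 1 = -(i - 1) by ring, show -i - 1 = -(i + 1) by ring,
        ]
      simp only [neg_inj]
      simp only [or_comm]
  | (ℓ + 2), i, j => by
      have IH := Kcoef_refl ε N (ℓ + 1)
      have hsum : ∑ j' : ZMod N, Kcoef ε N (ℓ + 1) (-i) j'
          = ∑ j' : ZMod N, Kcoef ε N (ℓ + 1) i j' := by
        rw [← Equiv.sum_comp (Equiv.neg (ZMod N))
          (fun j' => Kcoef ε N (ℓ + 1) (-i) j')]
        exact Finset.sum_congr rfl fun x _ => IH i x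
      simp only [Kcoef]
      rw [show -j - 1 = -(j + 1) by ring, show -j + 1 = -(j - 1) by ring,
        IH, IH, IH, hsum, show -i + 1 = -(i - 1) by ring, show -i - 1 = -(i + 1) by ring]
      simp only [neg_inj]
      ring

/-- **Translation invariance and symmetry of the interaction coefficients `K^p`.**
For every `p ≥ 1`, `K^p_{i,j}` depends only on `i - j (mod N)`, i.e.
`K^p_{i+k, j+k} = K^p_{i,j}` for every `k`, and `K^p_{i,j} = K^p_{j,i}`
(action–reaction symmetry). -/
theorem Kcoef_translation_invariance_and_symmetry
    (ε : ℝ) (hε : 0 < ε) (N : ℕ) [NeZero N] (p : ℕ) (hp : 1 ≤ p) :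
    (∀ i j k : ZMod N, Kcoef ε N p (i + k) (j + k) = Kcoef ε N p i j) ∧
    (∀ i j : ZMod N, Kcoef ε N p i j = Kcoef ε N p j i) := by
  refine ⟨Kcoef_trans ε N p, fun i j => ?_⟩
  have h := Kcoef_trans ε N p (-j) (-i) (i + j)
  rw [show -j + (i + j) = i by ring, show -i + (i + j) = j by ring] at h
  rw [h, Kcoef_refl]

end
end
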